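/- Let n, m, p, r be positive natural numbers. Let Y be an n × m real matrix with all entries in {0,1}, let X be an n × p real matrix, let t ∈ ℝ^n with t_i ∈ {−1, 1} for all i, let π ∈ ℝ^n with 0 < π_i < 1 for all i, set q_i = (t_i + 1)/2 − π_i, and let Q = diag(q). For V an m × r real matrix and W a p × r real matrix define L_A(V, W) = Σ_{i=1}^n Σ_{j=1}^m Y_{ij} · log(1 + exp(−(Q X W Vᵀ)_{ij})). Fix supporting matrices V⁰ (m × r) and W⁰ (p × r), let Φ† be the n × m matrix with Φ†_{ij} = exp(−(Q X W⁰ V⁰ᵀ)_{ij}) / (1 + exp(−(Q X W⁰ V⁰ᵀ)_{ij})), and set Z† = Q X W⁰ V⁰ᵀ + 4 (Y ⊙ Φ†), where ⊙ is the entrywise (Hadamard) product. Then for all m × r matrices V and p × r matrices W: L_A(V, W) − L_A(V⁰, W⁰) ≤ (1/8) · ( Σ_{i,j} (Z† − Q X W Vᵀ)_{ij}² − Σ_{i,j} (Z† − Q X W⁰ V⁰ᵀ)_{ij}² ). -/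

import Mathlib

noncomputable def sig (x : ℝ) : ℝ := (1 + Real.exp (-x))⁻¹

lemma one_add_exp_pos (x : ℝ) : 0 < 1 + Real.exp (-x) := by positivity

lemma sig_hasDerivAt (x : ℝ) :
    HasDerivAt sig (Real.exp (-x) / (1 + Real.exp (-x)) ^ 2) x := by
  have h1 : HasDerivAt (fun y : ℝ => 1 + Real.exp (-y)) (-Real.exp (-x)) x := by
    simpa using ((Real.hasDerivAt_exp (-x)).comp x ((hasDerivAt_id x).neg)).const_add 1
  have := h1.inv (ne_of_gt (one_add_exp_pos x))
  have e : sig = fun y : ℝ => (1 + Real.exp (-y))⁻¹ := funext fun y => rfl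
  rw [e]
  exact this.congr_deriv (by ring)

lemma sig_deriv_le (x : ℝ) : ‖Real.exp (-x) / (1 + Real.exp (-x)) ^ 2‖ ≤ 1/4 := by
  have he : 0 < Real.exp (-x) := Real.exp_pos _
  rw [Real.norm_eq_abs, abs_of_nonneg (by positivity)]
  rw [div_le_iff₀ (by positivity)]
  nlinarith [sq_nonneg (1 - Real.exp (-x))]

lemma sig_lipschitz (a b : ℝ) : |sig a - sig b| ≤ (1/4) * |a - b| := by
  have : LipschitzWith ((1:NNReal)/4) sig := by
    apply lipschitzWith_of_nnnorm_deriv_le (fun x => (sig_hasDerivAt x).differentiableAt)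
    intro x
    have := sig_deriv_le x
    rw [(sig_hasDerivAt x).deriv]
    simpa [← NNReal.coe_le_coe, coe_nnnorm] using this
  have h := this.dist_le_mul a b
  simpa [Real.dist_eq, NNReal.coe_div] using h

noncomputable def sp (x : ℝ) : ℝ := Real.log (1 + Real.exp x)

lemma sp_hasDerivAt (x : ℝ) : HasDerivAt sp (sig x) x := by
  have h1 : HasDerivAt (fun y : ℝ => 1 + Real.exp y) (Real.exp x) x := by
    simpa using (Real.hasDerivAt_exp x).const_add 1
  have h2 : (0:ℝ) < 1 + Real.exp x := by positivity
  have := h1.log (ne_of_gt h2)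
  convert this using 1
  rfl
  rw [sig, Real.exp_neg]
  field_simp
  ring

noncomputable def gfun (y x : ℝ) : ℝ := sig y * (x - y) + (x - y)^2/8 - sp x + sp y

lemma gfun_hasDerivAt (y x : ℝ) :
    HasDerivAt (gfun y) (sig y + (x - y)/4 - sig x) x := by
  have h1 : HasDerivAt (fun x : ℝ => sig y * (x - y)) (sig y) x := by
    simpa using ((hasDerivAt_id x).sub_const y).const_mul (sig y)
  have h2 : HasDerivAt (fun x : ℝ => (x - y)^2/8) ((x - y)/4) x := by
    have := (((hasDerivAt_id x).sub_const y).pow 2).div_const 8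
    exact this.congr_deriv (by rw [show (2:ℕ) - 1 = 1 from rfl]; simp only [id]; push_cast; ring)
  exact ((h1.add h2).sub (sp_hasDerivAt x)).add_const (sp y)

lemma sp_smooth (y x : ℝ) : sp x - sp y ≤ sig y * (x - y) + (x - y)^2/8 := by
  have key : 0 ≤ gfun y x := by
    have hdiff : ∀ z ∈ Set.univ, DifferentiableAt ℝ (gfun y) z :=
      fun z _ => (gfun_hasDerivAt y z).differentiableAt
    rcases le_total y x with hxy | hxy
    · have hmono : MonotoneOn (gfun y) (Set.Ici y) := by
        apply monotoneOn_of_deriv_nonneg (convex_Ici y)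
          ((Differentiable.continuous (fun z => (gfun_hasDerivAt y z).differentiableAt)).continuousOn)
        · intro z hz
          exact (gfun_hasDerivAt y z).differentiableAt.differentiableWithinAt
        · intro z hz
          rw [(gfun_hasDerivAt y z).deriv]
          have hz' : y ≤ z := le_of_lt (by simpa using hz)
          have := sig_lipschitz z y
          have habs : sig z - sig y ≤ (1/4) * (z - y) := by
            calc sig z - sig y ≤ |sig z - sig y| := le_abs_self _
            _ ≤ (1/4) * |z - y| := this
            _ = (1/4) * (z - y) := by rw [abs_of_nonneg (by linarith)]
          linarith
      have := hmono (Set.self_mem_Ici (a := y)) (by exact hxy) hxy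
      simpa [gfun] using this
    · have hanti : AntitoneOn (gfun y) (Set.Iic y) := by
        apply antitoneOn_of_deriv_nonpos (convex_Iic y)
          ((Differentiable.continuous (fun z => (gfun_hasDerivAt y z).differentiableAt)).continuousOn)
        · intro z hz
          exact (gfun_hasDerivAt y z).differentiableAt.differentiableWithinAt
        · intro z hz
          rw [(gfun_hasDerivAt y z).deriv]
          have hz' : z ≤ y := le_of_lt (by simpa using hz)
          have := sig_lipschitz y z
          have habs : sig y - sig z ≤ (1/4) * (y - z) := by
            calc sig y - sig z ≤ |sig y - sig z| := le_abs_self _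
            _ ≤ (1/4) * |y - z| := this
            _ = (1/4) * (y - z) := by rw [abs_of_nonneg (by linarith)]
          linarith
      have := hanti (by exact hxy) (Set.self_mem_Iic (a := y)) hxy
      simpa [gfun] using this
  unfold gfun at key
  linarith

lemma log_one_add_exp_neg (x : ℝ) : Real.log (1 + Real.exp (-x)) = sp x - x := by
  have h : 1 + Real.exp (-x) = Real.exp (-x) * (1 + Real.exp x) := by
    rw [mul_add, mul_one, ← Real.exp_add]
    simp [add_comm]
  rw [h, Real.log_mul (ne_of_gt (Real.exp_pos _)) (ne_of_gt (by positivity)),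
    Real.log_exp, sp]
  ring

lemma scalar_maj (yv x0 x : ℝ) (hy : yv = 0 ∨ yv = 1) :
    yv * (Real.log (1 + Real.exp (-x)) - Real.log (1 + Real.exp (-x0))) ≤
    (1/8) * ((x0 + 4 * (yv * (Real.exp (-x0) / (1 + Real.exp (-x0)))) - x)^2
           - (4 * (yv * (Real.exp (-x0) / (1 + Real.exp (-x0)))))^2) := by
  rcases hy with h | h
  · subst h
    simp only [zero_mul, mul_zero, add_zero]
    nlinarith [sq_nonneg (x0 - x)]
  · subst h
    set φ := Real.exp (-x0) / (1 + Real.exp (-x0)) with hφ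
    have hsig : sig x0 = 1 - φ := by
      rw [sig, hφ]
      field_simp
      ring
    have hrhs : (1/8) * ((x0 + 4 * (1 * φ) - x)^2 - (4 * (1 * φ))^2)
        = sig x0 * (x - x0) + (x - x0)^2/8 - (x - x0) := by
      rw [hsig]; ring
    rw [hrhs, one_mul, log_one_add_exp_neg x, log_one_add_exp_neg x0]
    have := sp_smooth x0 x
    linarith

lemma helper2 {n m : ℕ} (a b A B : Fin n → Fin m → ℝ)
    (h : ∀ i j, a i j - b i j ≤ 1/8 * (A i j - B i j)) :
    (∑ i, ∑ j, a i j) - (∑ i, ∑ j, b i j) ≤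
      1/8 * ((∑ i, ∑ j, A i j) - (∑ i, ∑ j, B i j)) := by
  rw [← Finset.sum_sub_distrib, ← Finset.sum_sub_distrib, Finset.mul_sum]
  apply Finset.sum_le_sum
  intro i _
  rw [← Finset.sum_sub_distrib, ← Finset.sum_sub_distrib, Finset.mul_sum]
  apply Finset.sum_le_sum
  intro j _
  exact h i j

open Matrix

theorem stmt_13 (n m p r : ℕ) (hn : 0 < n) (hm : 0 < m) (hp : 0 < p) (hr : 0 < r)
    (Y : Matrix (Fin n) (Fin m) ℝ) (hY : ∀ i j, Y i j = 0 ∨ Y i j = 1)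
    (X : Matrix (Fin n) (Fin p) ℝ)
    (t : Fin n → ℝ) (ht : ∀ i, t i = -1 ∨ t i = 1)
    (π : Fin n → ℝ) (hπ : ∀ i, 0 < π i ∧ π i < 1)
    (q : Fin n → ℝ) (hq : ∀ i, q i = (t i + 1) / 2 - π i)
    (Q : Matrix (Fin n) (Fin n) ℝ) (hQ : Q = Matrix.diagonal q)
    (LA : Matrix (Fin m) (Fin r) ℝ → Matrix (Fin p) (Fin r) ℝ → ℝ)
    (hLA : LA = fun V W =>
      ∑ i, ∑ j, Y i j * Real.log (1 + Real.exp (-((Q * X * W * Vᵀ) i j))))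
    (V₀ : Matrix (Fin m) (Fin r) ℝ) (W₀ : Matrix (Fin p) (Fin r) ℝ)
    (Φ : Matrix (Fin n) (Fin m) ℝ)
    (hΦ : ∀ i j, Φ i j = Real.exp (-((Q * X * W₀ * V₀ᵀ) i j)) /
                          (1 + Real.exp (-((Q * X * W₀ * V₀ᵀ) i j))))
    (Z : Matrix (Fin n) (Fin m) ℝ)
    (hZ : Z = Q * X * W₀ * V₀ᵀ + 4 • (Y ⊙ Φ)) :
    ∀ (V : Matrix (Fin m) (Fin r) ℝ) (W : Matrix (Fin p) (Fin r) ℝ),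
      LA V W - LA V₀ W₀ ≤
        (1 / 8) * ((∑ i, ∑ j, ((Z - Q * X * W * Vᵀ) i j) ^ 2) -
                   (∑ i, ∑ j, ((Z - Q * X * W₀ * V₀ᵀ) i j) ^ 2)) := by
  intro V W
  subst hLA hZ
  simp only
  apply helper2
  intro i j
  rw [← mul_sub]
  have hentry1 : ((Q * X * W₀ * V₀ᵀ + 4 • (Y ⊙ Φ) - Q * X * W * Vᵀ : Matrix (Fin n) (Fin m) ℝ) i j)
      = (Q * X * W₀ * V₀ᵀ) i j + 4 * (Y i j * Φ i j) - (Q * X * W * Vᵀ) i j := by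
    simp [Matrix.sub_apply, Matrix.add_apply, Matrix.smul_apply, Matrix.hadamard_apply]
  have hentry2 : ((Q * X * W₀ * V₀ᵀ + 4 • (Y ⊙ Φ) - Q * X * W₀ * V₀ᵀ : Matrix (Fin n) (Fin m) ℝ) i j)
      = 4 * (Y i j * Φ i j) := by
    simp [Matrix.sub_apply, Matrix.add_apply, Matrix.smul_apply, Matrix.hadamard_apply]
  rw [hentry1, hentry2, hΦ i j]
  exact scalar_maj (Y i j) ((Q * X * W₀ * V₀ᵀ) i j) ((Q * X * W * Vᵀ) i j) (hY i j)
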